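/- Define recursively $\nu_\ell = K_{\ell-1}(-1+t)/(1+\alpha^2)^{\ell-1}$ where $K_0(u)=u$ and $K_\ell(u) = K_{\ell-1}(u) + \alpha^2(1+\alpha^2)^{\ell-1}\kappa_1(K_{\ell-1}(u)/(1+\alpha^2)^{\ell-1})$. Then for all $\ell \ge 1$ and $t \in [0,2]$, $|\nu_\ell| \le 1$. -/

import Mathlib

open Real

noncomputable def kappa1 (u : ℝ) : ℝ := (u * (π - Real.arccos u) + Real.sqrt (1 - u ^ 2)) / π

lemma f_antitone : AntitoneOn (fun θ : ℝ => (π - θ) * Real.cos θ + Real.sin θ)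
    (Set.Icc 0 π) := by
  apply antitoneOn_of_deriv_nonpos (convex_Icc 0 π)
  · fun_prop
  · intro x hx
    apply DifferentiableAt.differentiableWithinAt
    fun_prop
  · intro x hx
    rw [interior_Icc] at hx
    have : deriv (fun θ : ℝ => (π - θ) * Real.cos θ + Real.sin θ) x
        = -(π - x) * Real.sin x := by
      have h1 : HasDerivAt (fun θ : ℝ => (π - θ) * Real.cos θ + Real.sin θ)
          ((0 - 1) * Real.cos x + (π - x) * (-Real.sin x) + Real.cos x) x := by
        exact (((hasDerivAt_const x π).sub (hasDerivAt_id x)).mul (Real.hasDerivAt_cos x)).add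
          (Real.hasDerivAt_sin x)
      rw [h1.deriv]; ring
    rw [this]
    have h2 : 0 ≤ Real.sin x := Real.sin_nonneg_of_nonneg_of_le_pi hx.1.le hx.2.le
    nlinarith [hx.2]

lemma kappa1_mem {v : ℝ} (hv : v ∈ Set.Icc (-1 : ℝ) 1) :
    kappa1 v ∈ Set.Icc (0 : ℝ) 1 := by
  have hπ := Real.pi_pos
  set θ := Real.arccos v with hθ
  have hθ0 : 0 ≤ θ := Real.arccos_nonneg v
  have hθπ : θ ≤ π := Real.arccos_le_pi v
  have hcos : Real.cos θ = v := Real.cos_arccos hv.1 hv.2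
  have hsin : Real.sqrt (1 - v ^ 2) = Real.sin θ := (Real.sin_arccos v).symm
  have hk : kappa1 v = ((π - θ) * Real.cos θ + Real.sin θ) / π := by
    rw [kappa1, hsin, hcos]; ring
  have h1 : (π - θ) * Real.cos θ + Real.sin θ ≤ (π - 0) * Real.cos 0 + Real.sin 0 :=
    f_antitone ⟨le_refl 0, hπ.le⟩ ⟨hθ0, hθπ⟩ hθ0
  have h2 : (π - π) * Real.cos π + Real.sin π ≤ (π - θ) * Real.cos θ + Real.sin θ :=
    f_antitone ⟨hθ0, hθπ⟩ ⟨hπ.le, le_refl π⟩ hθπ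
  simp [Real.cos_pi, Real.sin_pi] at h1 h2
  rw [hk]
  constructor
  · positivity
  · rw [div_le_one hπ]; linarith

theorem nu_ell_abs_le_one (α : ℝ) (hα : 0 < α)
    (K : ℕ → ℝ → ℝ)
    (hK0 : ∀ u, K 0 u = u)
    (hKrec : ∀ ℓ u, K (ℓ + 1) u =
      K ℓ u + α ^ 2 * (1 + α ^ 2) ^ ℓ * kappa1 (K ℓ u / (1 + α ^ 2) ^ ℓ)) :
    ∀ ℓ : ℕ, 1 ≤ ℓ → ∀ t ∈ Set.Icc (0 : ℝ) 2,
      |K (ℓ - 1) (-1 + t) / (1 + α ^ 2) ^ (ℓ - 1)| ≤ 1 := by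
  have hc : (0:ℝ) < 1 + α ^ 2 := by positivity
  have key : ∀ ℓ : ℕ, ∀ u ∈ Set.Icc (-1 : ℝ) 1,
      K ℓ u / (1 + α ^ 2) ^ ℓ ∈ Set.Icc (-1 : ℝ) 1 := by
    intro ℓ
    induction ℓ with
    | zero => intro u hu; simpa [hK0] using hu
    | succ n ih =>
      intro u hu
      have hv := ih u hu
      set v := K n u / (1 + α ^ 2) ^ n with hvd
      have hκ := kappa1_mem hv
      have hcn : (0:ℝ) < (1 + α ^ 2) ^ n := by positivity
      have hKn : K n u = v * (1 + α ^ 2) ^ n := by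
        rw [hvd, div_mul_cancel₀ _ hcn.ne']
      have heq : K (n + 1) u / (1 + α ^ 2) ^ (n + 1)
          = (v + α ^ 2 * kappa1 v) / (1 + α ^ 2) := by
        rw [hKrec, hKn, mul_div_cancel_right₀ _ hcn.ne']
        field_simp
        ring
      rw [heq]
      constructor
      · rw [le_div_iff₀ hc]
        nlinarith [hv.1, hκ.1, sq_nonneg α]
      · rw [div_le_one hc]
        nlinarith [hv.2, hκ.2, sq_nonneg α]
  intro ℓ hℓ t ht
  rw [abs_le]
  have := key (ℓ - 1) (-1 + t) ⟨by linarith [ht.1], by linarith [ht.2]⟩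
  exact ⟨this.1, this.2⟩
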